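/- (Quantitative asymptotic completeness of piecewise-constant bound propagation, formal content of Theorem 1.) Let σ : ℝ → ℝ be nondecreasing and L_σ-Lipschitz, and consider an L-layer network with weights W_l and biases b_l. Fix an input box [l_0, u_0] ⊂ ℝ^{n_0}. Define exact interval bound propagation by: ẑ_l^lo = (W_l)_+ l_{l−1} + (W_l)_− u_{l−1} + b_l, ẑ_l^hi = (W_l)_+ u_{l−1} + (W_l)_− l_{l−1} + b_l, l_l = σ.(ẑ_l^lo), u_l = σ.(ẑ_l^hi). Define the piecewise-constant propagation using segment boundaries M_0 < ⋯ < M_n with mesh Δ covering all pre-activation ranges, replacing l_l by the componentwise segment-infimum γ̲ of the segment containing the (piecewise-constant–propagated) lower pre-activation bound, and u_l by the componentwise segment-supremum γ̄ of the segment containing the upper pre-activation bound; denote these bounds l̃_l, ũ_l (with l̃_0 = l_0, ũ_0 = u_0). Then the computed bounds are sound (l̃_l ≤ l_l and ũ_l ≥ u_l componentwise) and the gap g_L := max over output components of max(ũ_L − u_L, l_L − l̃_L) satisfies g_L ≤ L_σ Δ · Σ_{k=1}^{L} ∏_{j=k+1}^{L} ( L_σ ‖W_j‖_{∞→∞} ).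 In particular, the piecewise-constant bounds converge to the exact interval-propagation bounds as Δ → 0. -/

import Mathlib

open scoped NNReal

/-- The induced `∞→∞` operator norm of a matrix: the maximum absolute row sum. -/
noncomputable def opNormInf {m n : ℕ} (W : Matrix (Fin m) (Fin n) ℝ) : ℝ :=
  ⨆ i, ∑ j, |W i j|

/-- Entrywise positive part of a matrix: `(W_+)_{jk} = max(W_{jk}, 0)`. -/
def matPos {m n : ℕ} (W : Matrix (Fin m) (Fin n) ℝ) : Matrix (Fin m) (Fin n) ℝ :=
  Matrix.of fun i j => max (W i j) 0

/-- Entrywise negative part of a matrix: `(W_−)_{jk} = min(W_{jk}, 0)`. -/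
def matNeg {m n : ℕ} (W : Matrix (Fin m) (Fin n) ℝ) : Matrix (Fin m) (Fin n) ℝ :=
  Matrix.of fun i j => min (W i j) 0

/-- Exact interval bound propagation (IBP): the pair `(l_l, u_l)` of lower/upper bound
vectors at layer `l`, with `l_0, u_0` given, `ẑ_l^lo = (W_l)_+ l_l + (W_l)_− u_l + b_l`,
`ẑ_l^hi = (W_l)_+ u_l + (W_l)_− l_l + b_l`, `l_{l+1} = σ.(ẑ_l^lo)`,
`u_{l+1} = σ.(ẑ_l^hi)`. -/
noncomputable def ibp (σ : ℝ → ℝ) (dims : ℕ → ℕ)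
    (W : ∀ l : ℕ, Matrix (Fin (dims (l + 1))) (Fin (dims l)) ℝ)
    (b : ∀ l : ℕ, Fin (dims (l + 1)) → ℝ)
    (l0 u0 : Fin (dims 0) → ℝ) : (l : ℕ) → (Fin (dims l) → ℝ) × (Fin (dims l) → ℝ)
  | 0 => (l0, u0)
  | l + 1 =>
      (fun j => σ (((matPos (W l)).mulVec (ibp σ dims W b l0 u0 l).1
          + (matNeg (W l)).mulVec (ibp σ dims W b l0 u0 l).2 + b l) j),
       fun j => σ (((matPos (W l)).mulVec (ibp σ dims W b l0 u0 l).2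
          + (matNeg (W l)).mulVec (ibp σ dims W b l0 u0 l).1 + b l) j))

lemma row_le_opNormInf {m n : ℕ} (W : Matrix (Fin m) (Fin n) ℝ) (i : Fin m) :
    ∑ j, |W i j| ≤ opNormInf W :=
  le_ciSup (f := fun i => ∑ j, |W i j|) (Set.Finite.bddAbove (Set.finite_range _)) i

lemma opNormInf_nonneg {m n : ℕ} (W : Matrix (Fin m) (Fin n) ℝ) : 0 ≤ opNormInf W := by
  rcases isEmpty_or_nonempty (Fin m) with h | h
  · rw [opNormInf, iSup, Set.range_eq_empty, Real.sSup_empty]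
  · obtain ⟨i⟩ := h
    exact le_trans (Finset.sum_nonneg fun j _ => abs_nonneg _) (row_le_opNormInf W i)

lemma sSup_image_Icc_mono {σ : ℝ → ℝ} (h : Monotone σ) {a c : ℝ} (hac : a ≤ c) :
    sSup (σ '' Set.Icc a c) = σ c := by
  apply le_antisymm
  · exact csSup_le ((Set.nonempty_Icc.2 hac).image σ)
      (by rintro x ⟨y, hy, rfl⟩; exact h hy.2)
  · exact le_csSup ⟨σ c, by rintro x ⟨y, hy, rfl⟩; exact h hy.2⟩
      ⟨c, Set.right_mem_Icc.2 hac, rfl⟩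

lemma sInf_image_Icc_mono {σ : ℝ → ℝ} (h : Monotone σ) {a c : ℝ} (hac : a ≤ c) :
    sInf (σ '' Set.Icc a c) = σ a := by
  apply le_antisymm
  · exact csInf_le ⟨σ a, by rintro x ⟨y, hy, rfl⟩; exact h hy.1⟩
      ⟨a, Set.left_mem_Icc.2 hac, rfl⟩
  · exact le_csInf ((Set.nonempty_Icc.2 hac).image σ)
      (by rintro x ⟨y, hy, rfl⟩; exact h hy.1)

/-- Quantitative asymptotic completeness of piecewise-constant bound propagation
(formal content of Theorem 1): for a nondecreasing `L_σ`-Lipschitz activation, the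
piecewise-constant propagated bounds `l̃_l, ũ_l` (which replace the activation applied to
the pre-activation bounds by the segment infimum/supremum of `σ` on the segment containing
the propagated lower/upper pre-activation bound) are sound with respect to exact interval
bound propagation, and the output gap is at most
`L_σ Δ · Σ_{k=1}^{L} Π_{j=k+1}^{L} (L_σ ‖W_j‖_{∞→∞})`; hence the piecewise-constant
bounds converge to the exact IBP bounds as the mesh `Δ → 0`. -/
theorem pwc_propagation_sound_and_asymptotically_complete
    (σ : ℝ → ℝ) (hmono : Monotone σ) (Lσ : ℝ≥0) (hσ : LipschitzWith Lσ σ)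
    (L : ℕ) (dims : ℕ → ℕ)
    (W : ∀ l : ℕ, Matrix (Fin (dims (l + 1))) (Fin (dims l)) ℝ)
    (b : ∀ l : ℕ, Fin (dims (l + 1)) → ℝ)
    (l0 u0 : Fin (dims 0) → ℝ) (hl0u0 : l0 ≤ u0)
    (nseg : ℕ) (hn : 0 < nseg) (M : Fin (nseg + 1) → ℝ) (hM : StrictMono M)
    (Δ : ℝ)
    (hΔ : Δ = Finset.univ.sup' ⟨⟨0, hn⟩, Finset.mem_univ _⟩
      fun i : Fin nseg => M i.succ - M i.castSucc)
    -- the piecewise-constant propagated bounds `l̃, ũ`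
    (lt ut : ∀ l : ℕ, Fin (dims l) → ℝ)
    (hlt0 : lt 0 = l0) (hut0 : ut 0 = u0)
    -- upper propagation: `ũ_{l+1}` is the segment supremum of `σ` on the segment
    -- (which exists, i.e. the segmentation covers the pre-activation range)
    -- containing the propagated upper pre-activation bound
    (hup : ∀ l : ℕ, ∀ j : Fin (dims (l + 1)), ∃ i : Fin nseg,
      ((matPos (W l)).mulVec (ut l) + (matNeg (W l)).mulVec (lt l) + b l) j ∈
          Set.Icc (M i.castSucc) (M i.succ) ∧
        ut (l + 1) j = sSup (σ '' Set.Icc (M i.castSucc) (M i.succ)))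
    -- lower propagation: `l̃_{l+1}` is the segment infimum of `σ` on the segment
    -- containing the propagated lower pre-activation bound
    (hlo : ∀ l : ℕ, ∀ j : Fin (dims (l + 1)), ∃ i : Fin nseg,
      ((matPos (W l)).mulVec (lt l) + (matNeg (W l)).mulVec (ut l) + b l) j ∈
          Set.Icc (M i.castSucc) (M i.succ) ∧
        lt (l + 1) j = sInf (σ '' Set.Icc (M i.castSucc) (M i.succ))) :
    -- soundness: `l̃_l ≤ l_l` and `u_l ≤ ũ_l` componentwise at every layer
    (∀ l : ℕ, lt l ≤ (ibp σ dims W b l0 u0 l).1 ∧ (ibp σ dims W b l0 u0 l).2 ≤ ut l) ∧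
      -- quantitative gap bound at the output layer
      ∀ j : Fin (dims L),
        ut L j - (ibp σ dims W b l0 u0 L).2 j ≤
            (Lσ : ℝ) * Δ *
              ∑ k ∈ Finset.range L, ∏ j' ∈ Finset.Ico (k + 1) L,
                ((Lσ : ℝ) * opNormInf (W j')) ∧
          (ibp σ dims W b l0 u0 L).1 j - lt L j ≤
            (Lσ : ℝ) * Δ *
              ∑ k ∈ Finset.range L, ∏ j' ∈ Finset.Ico (k + 1) L,
                ((Lσ : ℝ) * opNormInf (W j')) := by
  
  have hΔseg : ∀ i : Fin nseg, M i.castSucc ≤ M i.succ ∧ M i.succ - M i.castSucc ≤ Δ := by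
    intro i
    refine ⟨(hM (Fin.castSucc_lt_succ : i.castSucc < i.succ)).le, ?_⟩
    rw [hΔ]
    exact Finset.le_sup' (f := fun i : Fin nseg => M i.succ - M i.castSucc)
      (Finset.mem_univ i)
  have hΔnn : 0 ≤ Δ :=
    le_trans (by linarith [(hΔseg ⟨0, hn⟩).1]) (hΔseg ⟨0, hn⟩).2
  have lip : ∀ x y : ℝ, y ≤ x → σ x - σ y ≤ (Lσ : ℝ) * (x - y) := by
    intro x y h
    have h2 := hσ.dist_le_mul x y
    rw [Real.dist_eq, Real.dist_eq] at h2
    have h3 := le_trans (le_abs_self _) h2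
    rwa [abs_of_nonneg (by linarith)] at h3
  set E := ibp σ dims W b l0 u0 with hE
  set G : ℕ → ℝ := fun l => (Lσ : ℝ) * Δ *
      ∑ k ∈ Finset.range l, ∏ j' ∈ Finset.Ico (k + 1) l, ((Lσ : ℝ) * opNormInf (W j'))
    with hG
  have hGnn : ∀ l, 0 ≤ G l := by
    intro l
    apply mul_nonneg (mul_nonneg Lσ.coe_nonneg hΔnn)
    exact Finset.sum_nonneg fun k _ => Finset.prod_nonneg fun j' _ =>
      mul_nonneg Lσ.coe_nonneg (opNormInf_nonneg _)
  have hGsucc : ∀ l, G (l + 1) = (Lσ : ℝ) * Δ + (Lσ : ℝ) * (opNormInf (W l) * G l) := by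
    intro l
    simp only [hG]
    rw [Finset.sum_range_succ, Finset.Ico_self, Finset.prod_empty]
    have hc : ∀ k ∈ Finset.range l,
        ∏ j' ∈ Finset.Ico (k + 1) (l + 1), ((Lσ : ℝ) * opNormInf (W j'))
          = (∏ j' ∈ Finset.Ico (k + 1) l, ((Lσ : ℝ) * opNormInf (W j')))
            * ((Lσ : ℝ) * opNormInf (W l)) := fun k hk =>
      Finset.prod_Ico_succ_top (Nat.succ_le_of_lt (Finset.mem_range.mp hk)) _
    rw [Finset.sum_congr rfl hc, ← Finset.sum_mul]
    ring
  have hE0 : E 0 = (l0, u0) := by rw [hE]; rfl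
  have hEsucc : ∀ l, E (l + 1) =
      (fun j => σ (((matPos (W l)).mulVec (E l).1
          + (matNeg (W l)).mulVec (E l).2 + b l) j),
       fun j => σ (((matPos (W l)).mulVec (E l).2
          + (matNeg (W l)).mulVec (E l).1 + b l) j)) := by
    intro l; rw [hE]; rfl
  have main : ∀ l, (lt l ≤ (E l).1 ∧ (E l).2 ≤ ut l) ∧
      ∀ j, ut l j - (E l).2 j ≤ G l ∧ (E l).1 j - lt l j ≤ G l := by
    intro l
    induction l with
    | zero =>
      refine ⟨⟨?_, ?_⟩, ?_⟩
      · rw [hlt0, hE0]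
      · rw [hut0, hE0]
      · intro j
        rw [hut0, hlt0, hE0]
        simp [hG]
    | succ l ih =>
      obtain ⟨⟨hsl, hsu⟩, hgap⟩ := ih
      -- comparison of pre-activations, upper side
      have hzhi : ∀ j, ((matPos (W l)).mulVec ((E l).2)
            + (matNeg (W l)).mulVec ((E l).1) + b l) j
          ≤ ((matPos (W l)).mulVec (ut l) + (matNeg (W l)).mulVec (lt l) + b l) j := by
        intro j
        simp only [Pi.add_apply, Matrix.mulVec, dotProduct, matPos, matNeg,
          Matrix.of_apply]
        have A : ∑ k, (W l j k ⊔ 0) * (E l).2 k ≤ ∑ k, (W l j k ⊔ 0) * ut l k :=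
          Finset.sum_le_sum fun k _ =>
            mul_le_mul_of_nonneg_left (hsu k) (le_max_right _ 0)
        have B : ∑ k, (W l j k ⊓ 0) * (E l).1 k ≤ ∑ k, (W l j k ⊓ 0) * lt l k :=
          Finset.sum_le_sum fun k _ =>
            mul_le_mul_of_nonpos_left (hsl k) (min_le_right _ 0)
        linarith
      -- gap of pre-activations, upper side
      have hzhigap : ∀ j, ((matPos (W l)).mulVec (ut l) + (matNeg (W l)).mulVec (lt l) + b l) j
          - ((matPos (W l)).mulVec ((E l).2) + (matNeg (W l)).mulVec ((E l).1) + b l) j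
          ≤ opNormInf (W l) * G l := by
        intro j
        simp only [Pi.add_apply, Matrix.mulVec, dotProduct, matPos, matNeg,
          Matrix.of_apply]
        have key : (∑ k, max (W l j k) 0 * ut l k) + (∑ k, min (W l j k) 0 * lt l k)
            - ((∑ k, max (W l j k) 0 * (E l).2 k) + (∑ k, min (W l j k) 0 * (E l).1 k))
            ≤ ∑ k, |W l j k| * G l := by
          have hre : (∑ k, max (W l j k) 0 * ut l k) + (∑ k, min (W l j k) 0 * lt l k)
              - ((∑ k, max (W l j k) 0 * (E l).2 k) + (∑ k, min (W l j k) 0 * (E l).1 k))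
              = ∑ k, (max (W l j k) 0 * ut l k + min (W l j k) 0 * lt l k
                - (max (W l j k) 0 * (E l).2 k + min (W l j k) 0 * (E l).1 k)) := by
            rw [Finset.sum_sub_distrib, Finset.sum_add_distrib, Finset.sum_add_distrib]
          rw [hre]
          apply Finset.sum_le_sum
          intro k _
          have h1 : ut l k - (E l).2 k ≤ G l := (hgap k).1
          have h2 : (E l).1 k - lt l k ≤ G l := (hgap k).2
          have h3 : (E l).2 k ≤ ut l k := hsu k
          have h4 : lt l k ≤ (E l).1 k := hsl k
          have h5 : max (W l j k) 0 - min (W l j k) 0 = |W l j k| := by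
            rcases le_or_gt 0 (W l j k) with h | h
            · rw [max_eq_left h, min_eq_right h, abs_of_nonneg h]; ring
            · rw [max_eq_right h.le, min_eq_left h.le, abs_of_neg h]; ring
          nlinarith [le_max_right (W l j k) 0, min_le_right (W l j k) 0]
        calc _ ≤ ∑ k, |W l j k| * G l := by linarith [key]
          _ = (∑ k, |W l j k|) * G l := by rw [Finset.sum_mul]
          _ ≤ opNormInf (W l) * G l :=
            mul_le_mul_of_nonneg_right (row_le_opNormInf _ j) (hGnn l)
      -- comparison of pre-activations, lower side
      have hzlo : ∀ j, ((matPos (W l)).mulVec (lt l) + (matNeg (W l)).mulVec (ut l) + b l) j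
          ≤ ((matPos (W l)).mulVec ((E l).1)
            + (matNeg (W l)).mulVec ((E l).2) + b l) j := by
        intro j
        simp only [Pi.add_apply, Matrix.mulVec, dotProduct, matPos, matNeg,
          Matrix.of_apply]
        have A : ∑ k, (W l j k ⊔ 0) * lt l k ≤ ∑ k, (W l j k ⊔ 0) * (E l).1 k :=
          Finset.sum_le_sum fun k _ =>
            mul_le_mul_of_nonneg_left (hsl k) (le_max_right _ 0)
        have B : ∑ k, (W l j k ⊓ 0) * ut l k ≤ ∑ k, (W l j k ⊓ 0) * (E l).2 k :=
          Finset.sum_le_sum fun k _ =>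
            mul_le_mul_of_nonpos_left (hsu k) (min_le_right _ 0)
        linarith
      -- gap of pre-activations, lower side
      have hzlogap : ∀ j, ((matPos (W l)).mulVec ((E l).1)
            + (matNeg (W l)).mulVec ((E l).2) + b l) j
          - ((matPos (W l)).mulVec (lt l) + (matNeg (W l)).mulVec (ut l) + b l) j
          ≤ opNormInf (W l) * G l := by
        intro j
        simp only [Pi.add_apply, Matrix.mulVec, dotProduct, matPos, matNeg,
          Matrix.of_apply]
        have key : (∑ k, max (W l j k) 0 * (E l).1 k) + (∑ k, min (W l j k) 0 * (E l).2 k)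
            - ((∑ k, max (W l j k) 0 * lt l k) + (∑ k, min (W l j k) 0 * ut l k))
            ≤ ∑ k, |W l j k| * G l := by
          have hre : (∑ k, max (W l j k) 0 * (E l).1 k) + (∑ k, min (W l j k) 0 * (E l).2 k)
              - ((∑ k, max (W l j k) 0 * lt l k) + (∑ k, min (W l j k) 0 * ut l k))
              = ∑ k, (max (W l j k) 0 * (E l).1 k + min (W l j k) 0 * (E l).2 k
                - (max (W l j k) 0 * lt l k + min (W l j k) 0 * ut l k)) := by
            rw [Finset.sum_sub_distrib, Finset.sum_add_distrib, Finset.sum_add_distrib]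
          rw [hre]
          apply Finset.sum_le_sum
          intro k _
          have h1 : ut l k - (E l).2 k ≤ G l := (hgap k).1
          have h2 : (E l).1 k - lt l k ≤ G l := (hgap k).2
          have h3 : (E l).2 k ≤ ut l k := hsu k
          have h4 : lt l k ≤ (E l).1 k := hsl k
          have h5 : max (W l j k) 0 - min (W l j k) 0 = |W l j k| := by
            rcases le_or_gt 0 (W l j k) with h | h
            · rw [max_eq_left h, min_eq_right h, abs_of_nonneg h]; ring
            · rw [max_eq_right h.le, min_eq_left h.le, abs_of_neg h]; ring
          nlinarith [le_max_right (W l j k) 0, min_le_right (W l j k) 0]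
        calc _ ≤ ∑ k, |W l j k| * G l := by linarith [key]
          _ = (∑ k, |W l j k|) * G l := by rw [Finset.sum_mul]
          _ ≤ opNormInf (W l) * G l :=
            mul_le_mul_of_nonneg_right (row_le_opNormInf _ j) (hGnn l)
      -- values at layer l+1
      have hval : ∀ j : Fin (dims (l + 1)),
          ((E (l+1)).2 j ≤ ut (l+1) j ∧ ut (l+1) j - (E (l+1)).2 j ≤ G (l+1)) ∧
          (lt (l+1) j ≤ (E (l+1)).1 j ∧ (E (l+1)).1 j - lt (l+1) j ≤ G (l+1)) := by
        intro j
        constructor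
        · obtain ⟨i, hmem, heq⟩ := hup l j
          rw [sSup_image_Icc_mono hmono (hΔseg i).1] at heq
          set zpwc := ((matPos (W l)).mulVec (ut l) + (matNeg (W l)).mulVec (lt l) + b l) j
            with hzpwc
          have hEv : (E (l+1)).2 j = σ (((matPos (W l)).mulVec ((E l).2)
              + (matNeg (W l)).mulVec ((E l).1) + b l) j) := by rw [hEsucc l]
          set zE := ((matPos (W l)).mulVec ((E l).2)
              + (matNeg (W l)).mulVec ((E l).1) + b l) j with hzE
          have h1 : zE ≤ zpwc := hzhi j
          have h2 : zpwc - zE ≤ opNormInf (W l) * G l := hzhigap j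
          have h3 : zpwc ≤ M i.succ := hmem.2
          have h4 : M i.castSucc ≤ zpwc := hmem.1
          constructor
          · rw [hEv, heq]
            exact hmono (le_trans h1 h3)
          · rw [hEv, heq]
            have hA : σ (M i.succ) - σ zpwc ≤ (Lσ : ℝ) * (M i.succ - zpwc) :=
              lip _ _ h3
            have hB : σ zpwc - σ zE ≤ (Lσ : ℝ) * (zpwc - zE) := lip _ _ h1
            have hA' : (Lσ : ℝ) * (M i.succ - zpwc) ≤ (Lσ : ℝ) * Δ := by
              apply mul_le_mul_of_nonneg_left _ Lσ.coe_nonneg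
              linarith [(hΔseg i).2]
            have hB' : (Lσ : ℝ) * (zpwc - zE) ≤ (Lσ : ℝ) * (opNormInf (W l) * G l) :=
              mul_le_mul_of_nonneg_left h2 Lσ.coe_nonneg
            rw [hGsucc l]
            linarith
        · obtain ⟨i, hmem, heq⟩ := hlo l j
          rw [sInf_image_Icc_mono hmono (hΔseg i).1] at heq
          set zpwc := ((matPos (W l)).mulVec (lt l) + (matNeg (W l)).mulVec (ut l) + b l) j
            with hzpwc
          have hEv : (E (l+1)).1 j = σ (((matPos (W l)).mulVec ((E l).1)
              + (matNeg (W l)).mulVec ((E l).2) + b l) j) := by rw [hEsucc l]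
          set zE := ((matPos (W l)).mulVec ((E l).1)
              + (matNeg (W l)).mulVec ((E l).2) + b l) j with hzE
          have h1 : zpwc ≤ zE := hzlo j
          have h2 : zE - zpwc ≤ opNormInf (W l) * G l := hzlogap j
          have h3 : zpwc ≤ M i.succ := hmem.2
          have h4 : M i.castSucc ≤ zpwc := hmem.1
          constructor
          · rw [hEv, heq]
            exact hmono (le_trans h4 h1)
          · rw [hEv, heq]
            have hA : σ zpwc - σ (M i.castSucc) ≤ (Lσ : ℝ) * (zpwc - M i.castSucc) :=
              lip _ _ h4
            have hB : σ zE - σ zpwc ≤ (Lσ : ℝ) * (zE - zpwc) := lip _ _ h1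
            have hA' : (Lσ : ℝ) * (zpwc - M i.castSucc) ≤ (Lσ : ℝ) * Δ := by
              apply mul_le_mul_of_nonneg_left _ Lσ.coe_nonneg
              linarith [(hΔseg i).2]
            have hB' : (Lσ : ℝ) * (zE - zpwc) ≤ (Lσ : ℝ) * (opNormInf (W l) * G l) :=
              mul_le_mul_of_nonneg_left h2 Lσ.coe_nonneg
            rw [hGsucc l]
            linarith
      exact ⟨⟨fun j => (hval j).2.1, fun j => (hval j).1.1⟩,
        fun j => ⟨(hval j).1.2, (hval j).2.2⟩⟩
  refine ⟨fun l => (main l).1, fun j => ⟨?_, ?_⟩⟩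
  · have h := (main L).2 j
    simpa only [hG] using h.1
  · have h := (main L).2 j
    simpa only [hG] using h.2
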